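/- Fix a predictor h with 0 ≤ ℓ(h,z) ≤ K(h) for all z (K(h) > 0), let S be an i.i.d. size-m sample and Δ(h) = R(h) - R_m(h). Then for any α ∈ ℝ with m^{1-α}/(2K(h)²) ≠ 1: E_S[exp(m^α Δ(h)²)] ≤ 1 + (2/(1 - m^{1-α}/(2K(h)²)))·(exp(m^α K(h)² - m/2) - 1). -/

import Mathlib

open MeasureTheory Finset

lemma aux_mgf_le {Z : Type*} [MeasurableSpace Z] (μ : Measure Z) [IsProbabilityMeasure μ]
    (f : Z → ℝ) (K : ℝ) (hK : 0 < K) (hfm : Measurable f)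
    (hbd : ∀ z, |f z| ≤ K) (hmean : ∫ z, f z ∂μ = 0) (t : ℝ) :
    ∫ z, Real.exp (t * f z) ∂μ ≤ Real.exp (t ^ 2 * K ^ 2 / 2) := by
  have hK2 : (2 : ℝ) * K ≠ 0 := by positivity
  have hfint : Integrable f μ :=
    (integrable_const K).mono' hfm.aestronglyMeasurable
      (Filter.Eventually.of_forall fun z => by simpa using hbd z)
  set C : ℝ := (Real.exp (-(t * K)) + Real.exp (t * K)) / 2 with hC
  set D : ℝ := (Real.exp (t * K) - Real.exp (-(t * K))) / (2 * K) with hD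
  have hpt : ∀ z, Real.exp (t * f z) ≤ C + D * f z := by
    intro z
    obtain ⟨h1, h2⟩ := abs_le.1 (hbd z)
    have ha : (0 : ℝ) ≤ (K - f z) / (2 * K) := by
      apply div_nonneg <;> linarith
    have hb : (0 : ℝ) ≤ (K + f z) / (2 * K) := by
      apply div_nonneg <;> linarith
    have hab : (K - f z) / (2 * K) + (K + f z) / (2 * K) = 1 := by
      field_simp
      ring
    have hcvx := convexOn_exp.2 (Set.mem_univ (-(t * K))) (Set.mem_univ (t * K)) ha hb hab
    have harg : (K - f z) / (2 * K) * (-(t * K)) + (K + f z) / (2 * K) * (t * K) = t * f z := by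
      rw [div_mul_eq_mul_div, div_mul_eq_mul_div, ← add_div, div_eq_iff hK2]
      ring
    simp only [smul_eq_mul] at hcvx
    rw [harg] at hcvx
    refine hcvx.trans (le_of_eq ?_)
    have hKne : K ≠ 0 := hK.ne'
    simp only [hC, hD]
    field_simp
    ring
  have hintRHS : Integrable (fun z => C + D * f z) μ :=
    (integrable_const C).add (hfint.const_mul D)
  have hintLHS : Integrable (fun z => Real.exp (t * f z)) μ := by
    refine (integrable_const (Real.exp (|t| * K))).mono'
      ((Real.measurable_exp.comp (hfm.const_mul t)).aestronglyMeasurable)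
      (Filter.Eventually.of_forall fun z => ?_)
    rw [Real.norm_eq_abs, abs_of_pos (Real.exp_pos _)]
    apply Real.exp_le_exp.2
    calc t * f z ≤ |t * f z| := le_abs_self _
      _ = |t| * |f z| := abs_mul _ _
      _ ≤ |t| * K := by
          exact mul_le_mul_of_nonneg_left (hbd z) (abs_nonneg t)
  calc ∫ z, Real.exp (t * f z) ∂μ ≤ ∫ z, (C + D * f z) ∂μ :=
        integral_mono hintLHS hintRHS hpt
    _ = C := by
        rw [integral_add (integrable_const C) (hfint.const_mul D), integral_const,
          integral_const_mul, hmean]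
        simp
    _ = Real.cosh (t * K) := by rw [Real.cosh_eq, hC]; ring_nf
    _ ≤ Real.exp ((t * K) ^ 2 / 2) := Real.cosh_le_exp_half_sq _
    _ = Real.exp (t ^ 2 * K ^ 2 / 2) := by ring_nf

lemma aux_chernoff {Z : Type*} [MeasurableSpace Z] (μ : Measure Z) [IsProbabilityMeasure μ]
    (f : Z → ℝ) (K : ℝ) (hK : 0 < K) (hfm : Measurable f)
    (hbd : ∀ z, |f z| ≤ K) (hmean : ∫ z, f z ∂μ = 0)
    (m : ℕ) (hm : 0 < m) (a : ℝ) (ha : 0 ≤ a) :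
    ((Measure.pi fun _ : Fin m => μ) {S | a ≤ ∑ i, f (S i)}).toReal
      ≤ Real.exp (-a ^ 2 / (2 * m * K ^ 2)) := by
  letI : MeasureSpace Z := ⟨μ⟩
  haveI : IsProbabilityMeasure (volume : Measure Z) := inferInstanceAs (IsProbabilityMeasure μ)
  set pp : Measure (Fin m → Z) := Measure.pi fun _ : Fin m => μ with hpp
  haveI : IsProbabilityMeasure pp := Measure.pi.instIsProbabilityMeasure _
  have hmpos : (0 : ℝ) < m := Nat.cast_pos.2 hm
  set t : ℝ := a / (m * K ^ 2) with hT
  have ht : 0 ≤ t := div_nonneg ha (by positivity)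
  set X : (Fin m → Z) → ℝ := fun S => ∑ i, f (S i) with hX
  set g : Z → ℝ := fun z => Real.exp (t * f z) with hg
  have hgint : Integrable g μ := by
    refine (integrable_const (Real.exp (t * K))).mono'
      ((Real.measurable_exp.comp (hfm.const_mul t)).aestronglyMeasurable)
      (Filter.Eventually.of_forall fun z => ?_)
    rw [Real.norm_eq_abs, abs_of_pos (Real.exp_pos _)]
    apply Real.exp_le_exp.2
    calc t * f z ≤ t * |f z| := mul_le_mul_of_nonneg_left (le_abs_self _) ht
      _ ≤ t * K := mul_le_mul_of_nonneg_left (hbd z) ht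
  have hfun : (fun S : Fin m → Z => Real.exp (t * X S)) = fun S => ∏ i, g (S i) := by
    funext S
    rw [hX, Finset.mul_sum, Real.exp_sum]
  have h_int : Integrable (fun S => Real.exp (t * X S)) pp := by
    rw [hfun, hpp]
    have := MeasureTheory.Integrable.fintype_prod (f := fun _ : Fin m => g) (fun _ => hgint)
    exact this
  have key := ProbabilityTheory.measure_ge_le_exp_mul_mgf (μ := pp) (X := X) a ht h_int
  have hmgf : ProbabilityTheory.mgf X pp t = (∫ z, g z ∂μ) ^ m := by
    rw [ProbabilityTheory.mgf, hfun, hpp]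
    have := MeasureTheory.integral_fintype_prod_eq_pow (E := Z) (ι := Fin m) g (μ := μ)
    simpa using this
  have hbase0 : 0 ≤ ∫ z, g z ∂μ := integral_nonneg fun z => (Real.exp_pos _).le
  have hbase : ∫ z, g z ∂μ ≤ Real.exp (t ^ 2 * K ^ 2 / 2) :=
    aux_mgf_le μ f K hK hfm hbd hmean t
  have hmgf_le : ProbabilityTheory.mgf X pp t ≤ Real.exp ((m : ℝ) * (t ^ 2 * K ^ 2 / 2)) := by
    rw [hmgf, Real.exp_nat_mul]
    exact pow_le_pow_left₀ hbase0 hbase m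
  refine key.trans ?_
  calc Real.exp (-t * a) * ProbabilityTheory.mgf X pp t
      ≤ Real.exp (-t * a) * Real.exp ((m : ℝ) * (t ^ 2 * K ^ 2 / 2)) :=
        mul_le_mul_of_nonneg_left hmgf_le (Real.exp_pos _).le
    _ = Real.exp (-t * a + (m : ℝ) * (t ^ 2 * K ^ 2 / 2)) := (Real.exp_add _ _).symm
    _ = Real.exp (-a ^ 2 / (2 * m * K ^ 2)) := by
        congr 1
        rw [hT]
        field_simp
        ring

/-- naive exponential moment bound via tail integrals:
E_S[exp(m^α Δ(h)²)] ≤ 1 + (2/(1 - m^{1-α}/(2K(h)²)))(exp(m^α K(h)² - m/2) - 1). -/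
theorem statement13 {Z : Type*} [MeasurableSpace Z] {H : Type*}
    (μ : Measure Z) [IsProbabilityMeasure μ]
    (m : ℕ) (hm : 0 < m) (ℓ : H → Z → ℝ) (K : H → ℝ) (h : H)
    (hmeas : Measurable (ℓ h)) (hK : 0 < K h)
    (hℓpos : ∀ z : Z, 0 ≤ ℓ h z) (hℓK : ∀ z : Z, ℓ h z ≤ K h) (α : ℝ)
    (hne : (m : ℝ) ^ ((1 : ℝ) - α) / (2 * K h ^ 2) ≠ 1) :
    ∫ S : Fin m → Z,
        Real.exp ((m : ℝ) ^ α *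
          ((∫ z, ℓ h z ∂μ) - (1 / (m : ℝ)) * ∑ i : Fin m, ℓ h (S i)) ^ 2)
      ∂(Measure.pi fun _ : Fin m => μ)
      ≤ 1 + (2 / (1 - (m : ℝ) ^ ((1 : ℝ) - α) / (2 * K h ^ 2)))
            * (Real.exp ((m : ℝ) ^ α * K h ^ 2 - (m : ℝ) / 2) - 1) := by
  classical
  have hmpos : (0 : ℝ) < m := Nat.cast_pos.2 hm
  set κ : ℝ := K h with hκ
  set A : ℝ := (m : ℝ) ^ α with hA
  set c : ℝ := (m : ℝ) ^ ((1 : ℝ) - α) / (2 * κ ^ 2) with hc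
  set pp : Measure (Fin m → Z) := Measure.pi fun _ : Fin m => μ with hpp
  haveI : IsProbabilityMeasure pp := Measure.pi.instIsProbabilityMeasure _
  have hApos : 0 < A := Real.rpow_pos_of_pos hmpos α
  have hm1α : (m : ℝ) ^ ((1 : ℝ) - α) = (m : ℝ) / A := by
    rw [hA, Real.rpow_sub hmpos, Real.rpow_one]
  have hcne : c ≠ 1 := hne
  set R : ℝ := ∫ z, ℓ h z ∂μ with hR
  have hℓint : Integrable (ℓ h) μ :=
    (integrable_const κ).mono' hmeas.aestronglyMeasurable
      (Filter.Eventually.of_forall fun z => by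
        rw [Real.norm_eq_abs, abs_of_nonneg (hℓpos z)]; exact hℓK z)
  have hR0 : 0 ≤ R := integral_nonneg hℓpos
  have hRK : R ≤ κ := by
    calc R ≤ ∫ _, κ ∂μ := integral_mono hℓint (integrable_const κ) hℓK
      _ = κ := by simp
  set Y : Z → ℝ := fun z => ℓ h z - R with hY
  have hYm : Measurable Y := hmeas.sub measurable_const
  have hYbd : ∀ z, |Y z| ≤ κ := fun z =>
    abs_le.2 ⟨by simp only [hY]; linarith [hℓpos z], by simp only [hY]; linarith [hℓK z]⟩
  have hYmean : ∫ z, Y z ∂μ = 0 := by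
    simp only [hY]
    rw [integral_sub hℓint (integrable_const R), integral_const]
    simp [hR]
  set Δ : (Fin m → Z) → ℝ := fun S => R - (1 / (m : ℝ)) * ∑ i, ℓ h (S i) with hΔ
  have hsumY : ∀ S : Fin m → Z, ∑ i, Y (S i) = -((m : ℝ) * Δ S) := by
    intro S
    simp only [hY, hΔ, Finset.sum_sub_distrib, Finset.sum_const, Finset.card_univ,
      Fintype.card_fin, nsmul_eq_mul]
    field_simp
    ring
  have hΔbd : ∀ S, |Δ S| ≤ κ := by
    intro S
    have hsum0 : 0 ≤ ∑ i, ℓ h (S i) := Finset.sum_nonneg fun i _ => hℓpos _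
    have hsumK : ∑ i : Fin m, ℓ h (S i) ≤ (m : ℝ) * κ := by
      calc ∑ i : Fin m, ℓ h (S i) ≤ ∑ _i : Fin m, κ := Finset.sum_le_sum fun i _ => hℓK _
        _ = (m : ℝ) * κ := by simp [mul_comm]
    have hmean0 : 0 ≤ (1 / (m : ℝ)) * ∑ i, ℓ h (S i) := by positivity
    have hmeanK : (1 / (m : ℝ)) * ∑ i, ℓ h (S i) ≤ κ := by
      rw [div_mul_eq_mul_div, one_mul, div_le_iff₀ hmpos]
      linarith
    rw [abs_le]
    constructor <;> simp only [hΔ] <;> linarith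
  set W : (Fin m → Z) → ℝ := fun S => Real.exp (A * Δ S ^ 2) with hW
  set T : ℝ := Real.exp (A * κ ^ 2) with hTdef
  have hT1 : 1 ≤ T := Real.one_le_exp (by positivity)
  have hWmeas : Measurable W := by
    have h1 : Measurable fun S : Fin m → Z => ∑ i, ℓ h (S i) :=
      Finset.measurable_sum _ fun i _ => hmeas.comp (measurable_pi_apply i)
    exact Real.measurable_exp.comp
      (((measurable_const.sub (h1.const_mul (1 / (m : ℝ)))).pow_const 2).const_mul A)
  have hW1 : ∀ S, 1 ≤ W S := fun S => Real.one_le_exp (by positivity)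
  have hWT : ∀ S, W S ≤ T := fun S => Real.exp_le_exp.2 <|
    mul_le_mul_of_nonneg_left (sq_le_sq' (neg_le_of_abs_le (hΔbd S)) (le_of_abs_le (hΔbd S)))
      hApos.le
  have hWint : Integrable W pp :=
    (integrable_const T).mono' hWmeas.aestronglyMeasurable
      (Filter.Eventually.of_forall fun S => by
        rw [Real.norm_eq_abs, abs_of_pos (Real.exp_pos _)]; exact hWT S)
  set F : ℝ → ℝ := fun t => (pp {S | t ≤ W S}).toReal with hF
  have hlayer : ∫ S, W S ∂pp = ∫ t in Set.Ioc 0 T, F t :=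
    hWint.integral_eq_integral_Ioc_meas_le
      (Filter.Eventually.of_forall fun S => (Real.exp_pos _).le)
      (Filter.Eventually.of_forall hWT)
  have hFmeas : Measurable F := by
    apply Measurable.ennreal_toReal
    exact Antitone.measurable fun s t hst => measure_mono fun S hS => le_trans hst hS
  have hFbd : ∀ t, F t ≤ 1 := by
    intro t
    have h1 : pp {S | t ≤ W S} ≤ 1 := prob_le_one
    simpa using ENNReal.toReal_mono ENNReal.one_ne_top h1
  have hFint : ∀ a b : ℝ, IntegrableOn F (Set.Ioc a b) := by
    intro a b
    refine Integrable.mono' ((integrableOn_const (s := Set.Ioc a b) (μ := volume) (C := (1:ℝ)) measure_Ioc_lt_top.ne))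
      hFmeas.aestronglyMeasurable (Filter.Eventually.of_forall fun t => ?_)
    rw [Real.norm_eq_abs, abs_of_nonneg ENNReal.toReal_nonneg]
    exact hFbd t
  -- tail bound
  have htail : ∀ t ∈ Set.Ioc (1 : ℝ) T, F t ≤ 2 * t ^ (-c) := by
    intro t ht
    have ht1 : 1 < t := ht.1
    have htpos : 0 < t := lt_trans one_pos ht1
    have hlog : 0 < Real.log t := Real.log_pos ht1
    set v : ℝ := Real.log t / A with hv
    have hvpos : 0 < v := div_pos hlog hApos
    set a : ℝ := (m : ℝ) * Real.sqrt v with ha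
    have ha0 : 0 ≤ a := by positivity
    have hsub : {S | t ≤ W S} ⊆
        {S | a ≤ ∑ i, Y (S i)} ∪ {S | a ≤ ∑ i, (fun z => -Y z) (S i)} := by
      intro S hS
      simp only [Set.mem_setOf_eq, hW] at hS
      have hlt : Real.log t ≤ A * Δ S ^ 2 := by
        rw [← Real.log_exp (A * Δ S ^ 2)]
        exact Real.log_le_log htpos hS
      have hvle : v ≤ Δ S ^ 2 := by
        rw [hv, div_le_iff₀ hApos]
        linarith [hlt]
      have hsq : Real.sqrt v ≤ |Δ S| := by
        rw [← Real.sqrt_sq_eq_abs]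
        exact Real.sqrt_le_sqrt hvle
      have habs : a ≤ |∑ i, Y (S i)| := by
        rw [hsumY S, abs_neg, abs_mul, abs_of_pos hmpos, ha]
        exact mul_le_mul_of_nonneg_left hsq hmpos.le
      rcases le_abs.1 habs with h1 | h1
      · left; exact h1
      · right
        simp only [Set.mem_setOf_eq, Finset.sum_neg_distrib]
        linarith [h1]
    have h1 := aux_chernoff μ Y κ hK hYm hYbd hYmean m hm a ha0
    have h2 := aux_chernoff μ (fun z => -Y z) κ hK hYm.neg
      (fun z => by rw [abs_neg]; exact hYbd z)
      (by rw [integral_neg, hYmean, neg_zero]) m hm a ha0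
    have hexp : -a ^ 2 / (2 * (m : ℝ) * κ ^ 2) = -c * Real.log t := by
      rw [ha, mul_pow, Real.sq_sqrt hvpos.le, hv, hc, hm1α]
      field_simp
    calc F t ≤ ((pp {S | a ≤ ∑ i, Y (S i)}) + pp {S | a ≤ ∑ i, (fun z => -Y z) (S i)}).toReal := by
          apply ENNReal.toReal_mono
          · exact ENNReal.add_ne_top.2 ⟨measure_ne_top _ _, measure_ne_top _ _⟩
          · exact (measure_mono hsub).trans (measure_union_le _ _)
      _ = (pp {S | a ≤ ∑ i, Y (S i)}).toReal
            + (pp {S | a ≤ ∑ i, (fun z => -Y z) (S i)}).toReal :=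
          ENNReal.toReal_add (measure_ne_top _ _) (measure_ne_top _ _)
      _ ≤ Real.exp (-a ^ 2 / (2 * m * κ ^ 2)) + Real.exp (-a ^ 2 / (2 * m * κ ^ 2)) :=
          add_le_add h1 h2
      _ = 2 * Real.exp (-c * Real.log t) := by rw [← hexp]; ring
      _ = 2 * t ^ (-c) := by rw [Real.rpow_def_of_pos htpos, mul_comm (Real.log t)]
  -- split the integral
  have hsplit : ∫ t in Set.Ioc 0 T, F t
      = (∫ t in Set.Ioc (0:ℝ) 1, F t) + ∫ t in Set.Ioc (1:ℝ) T, F t := by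
    rw [← setIntegral_union (Set.Ioc_disjoint_Ioc_of_le le_rfl) measurableSet_Ioc (hFint 0 1) (hFint 1 T),
      Set.Ioc_union_Ioc_eq_Ioc zero_le_one hT1]
  have hpart1 : ∫ t in Set.Ioc (0:ℝ) 1, F t ≤ 1 := by
    calc ∫ t in Set.Ioc (0:ℝ) 1, F t ≤ ∫ _t in Set.Ioc (0:ℝ) 1, (1:ℝ) :=
          setIntegral_mono_on (hFint 0 1) (integrableOn_const measure_Ioc_lt_top.ne)
            measurableSet_Ioc (fun t _ => hFbd t)
      _ = 1 := by simp
  have hint2 : IntegrableOn (fun t : ℝ => 2 * t ^ (-c)) (Set.Ioc 1 T) := by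
    have hcont : ContinuousOn (fun t : ℝ => 2 * t ^ (-c)) (Set.Icc 1 T) :=
      continuousOn_const.mul (fun t ht =>
        (Real.continuousAt_rpow_const t (-c) (Or.inl (by
          have := ht.1; intro h0; rw [h0] at this; linarith))).continuousWithinAt)
    exact hcont.integrableOn_Icc.mono_set Set.Ioc_subset_Icc_self
  have heval : ∫ t in Set.Ioc (1:ℝ) T, 2 * t ^ (-c)
      = 2 * ((T ^ ((1:ℝ) - c) - 1) / (1 - c)) := by
    rw [← intervalIntegral.integral_of_le hT1, intervalIntegral.integral_const_mul,
      integral_rpow (Or.inr ⟨by simpa using hcne, by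
        rw [Set.uIcc_of_le hT1]
        intro h0
        have := h0.1
        linarith⟩)]
    rw [Real.one_rpow, show -c + 1 = 1 - c by ring]
  have hpart2 : ∫ t in Set.Ioc (1:ℝ) T, F t ≤ 2 * ((T ^ ((1:ℝ) - c) - 1) / (1 - c)) := by
    rw [← heval]
    exact setIntegral_mono_on (hFint 1 T) hint2 measurableSet_Ioc htail
  have hT1c : T ^ ((1:ℝ) - c) = Real.exp (A * κ ^ 2 - (m : ℝ) / 2) := by
    rw [hTdef, Real.rpow_def_of_pos (Real.exp_pos _), Real.log_exp]
    congr 1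
    rw [hc, hm1α]
    field_simp
  have hgoalR : (1 : ℝ) + 2 / (1 - c) * (Real.exp (A * κ ^ 2 - (m : ℝ) / 2) - 1)
      = 1 + 2 * ((T ^ ((1:ℝ) - c) - 1) / (1 - c)) := by
    rw [hT1c]; ring
  calc ∫ S : Fin m → Z, Real.exp (A * (R - (1 / (m : ℝ)) * ∑ i : Fin m, ℓ h (S i)) ^ 2) ∂pp
      = ∫ S, W S ∂pp := rfl
    _ = ∫ t in Set.Ioc 0 T, F t := hlayer
    _ = (∫ t in Set.Ioc (0:ℝ) 1, F t) + ∫ t in Set.Ioc (1:ℝ) T, F t := hsplit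
    _ ≤ 1 + 2 * ((T ^ ((1:ℝ) - c) - 1) / (1 - c)) := add_le_add hpart1 hpart2
    _ = 1 + 2 / (1 - c) * (Real.exp (A * κ ^ 2 - (m : ℝ) / 2) - 1) := hgoalR.symm
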